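/- arXiv:2005.12984 — 2 statements merged into one kernel-verified Lean document; each statement's English description precedes it below -/
import Mathlib

section
/- The function s ↦ −2γ_e − 2ψ(s/2) − π·cot(πs/4) extends to an analytic function W on the strip {s ∈ ℂ : −2 < Re s < 4} (its singularity at s = 0 is removable), and this extension satisfies W(0) = 0 and W(2) = 0. -/
open Complex MeasureTheory Set Filter

/-- The digamma function `ψ = Γ'/Γ`. -/
noncomputable def digamma (z : ℂ) : ℂ := deriv Complex.Gamma z / Complex.Gamma z

/-- The raw formula for the function `W`:
`W(s) = −2γ_e − 2ψ(s/2) − π·cot(πs/4)`. -/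
noncomputable def Wfun (s : ℂ) : ℂ :=
  -2 * (Real.eulerMascheroniConstant : ℂ) - 2 * _root_.digamma (s / 2)
    - (Real.pi : ℂ) * Complex.cot ((Real.pi : ℂ) * s / 4)

lemma digamma_eq_logDeriv : _root_.digamma = logDeriv Complex.Gamma := rfl

lemma gamma_diff {z : ℂ} (hz : Complex.Gamma z ≠ 0) : DifferentiableAt ℂ Complex.Gamma z :=
  Complex.differentiableAt_Gamma z (fun m hm => hz ((Complex.Gamma_eq_zero_iff z).2 ⟨m, hm⟩))

lemma analyticAt_Gamma {z : ℂ} (hz : Complex.Gamma z ≠ 0) : AnalyticAt ℂ Complex.Gamma z := by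
  have h1 : AnalyticAt ℂ (fun s => (Complex.Gamma s)⁻¹) z :=
    (Complex.differentiable_one_div_Gamma.differentiableOn.analyticOnNhd isOpen_univ) z (mem_univ z)
  have h2 := h1.inv (by simpa using hz)
  simpa only [Pi.inv_def, inv_inv] using h2

lemma analyticAt_digamma {z : ℂ} (hz : Complex.Gamma z ≠ 0) : AnalyticAt ℂ _root_.digamma z := by
  have hG : AnalyticOnNhd ℂ Complex.Gamma {w : ℂ | Complex.Gamma w ≠ 0} :=
    fun w hw => analyticAt_Gamma hw
  exact (hG.deriv z hz).div (analyticAt_Gamma hz) hz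

lemma log_two_eq : Complex.log 2 = (Real.log 2 : ℂ) := by
  rw [show (2:ℂ) = ((2:ℝ):ℂ) by norm_num, Complex.ofReal_log (by norm_num : (0:ℝ) ≤ 2)]

/-- logarithmic derivative version of the Legendre duplication formula -/
lemma digamma_dup {z : ℂ} (h1 : Complex.Gamma z ≠ 0) (h2 : Complex.Gamma (z + 1/2) ≠ 0)
    (h3 : Complex.Gamma (2*z) ≠ 0) :
    _root_.digamma z + _root_.digamma (z + 1/2) = 2 * _root_.digamma (2*z) - 2 * (Real.log 2 : ℂ) := by
  have hfun : (fun z : ℂ => Complex.Gamma z * Complex.Gamma (z + 1/2))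
      = fun z : ℂ => Complex.Gamma (2*z) * (2:ℂ) ^ (1 - 2*z) * (Real.sqrt Real.pi : ℂ) :=
    funext Complex.Gamma_mul_Gamma_add_half
  have key := congrFun (congrArg logDeriv hfun) z
  -- compute LHS
  have d2 : DifferentiableAt ℂ (fun z : ℂ => Complex.Gamma (z + 1/2)) z :=
    (gamma_diff h2).comp z (by fun_prop)
  have lhs_eq : logDeriv (fun z : ℂ => Complex.Gamma z * Complex.Gamma (z + 1/2)) z
      = _root_.digamma z + _root_.digamma (z + 1/2) := by
    rw [logDeriv_mul z h1 h2 (gamma_diff h1) d2, digamma_eq_logDeriv]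
    congr 1
    have : (fun z : ℂ => Complex.Gamma (z + 1/2)) = Complex.Gamma ∘ (fun z : ℂ => z + 1/2) := rfl
    rw [this, logDeriv_comp (f := Complex.Gamma) (g := fun z : ℂ => z + 1/2)
      (gamma_diff h2) (by fun_prop), deriv_add_const, deriv_id'', mul_one]
  -- compute RHS
  have h2pow : (fun z : ℂ => (2:ℂ) ^ (1 - 2*z))
      = fun z : ℂ => Complex.exp (Complex.log 2 * (1 - 2*z)) := by
    funext w; rw [Complex.cpow_def_of_ne_zero two_ne_zero]
  have hDexp : ∀ w : ℂ, HasDerivAt (fun z : ℂ => Complex.exp (Complex.log 2 * (1 - 2*z)))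
      (Complex.exp (Complex.log 2 * (1 - 2*w)) * (Complex.log 2 * (-2))) w := by
    intro w
    have h := ((((hasDerivAt_id w).const_mul (2:ℂ)).const_sub 1).const_mul (Complex.log 2)).cexp
    simp only [id_eq] at h
    simpa only [mul_one] using h
  have dG2 : DifferentiableAt ℂ (fun z : ℂ => Complex.Gamma (2*z)) z :=
    (gamma_diff h3).comp z (by fun_prop)
  have lgG2 : logDeriv (fun z : ℂ => Complex.Gamma (2*z)) z = 2 * _root_.digamma (2*z) := by
    have : (fun z : ℂ => Complex.Gamma (2*z)) = Complex.Gamma ∘ (fun z : ℂ => 2*z) := rfl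
    rw [this, logDeriv_comp (gamma_diff h3) (by fun_prop), digamma_eq_logDeriv,
      deriv_const_mul _ differentiableAt_id, deriv_id'', mul_one, mul_comm]
  have lgpow : logDeriv (fun z : ℂ => (2:ℂ) ^ (1 - 2*z)) z = -2 * (Real.log 2 : ℂ) := by
    rw [h2pow, logDeriv_apply, (hDexp z).deriv]
    rw [mul_div_cancel_left₀ _ (Complex.exp_ne_zero _), log_two_eq]
    ring
  have rhs_eq : logDeriv (fun z : ℂ => Complex.Gamma (2*z) * (2:ℂ) ^ (1 - 2*z)
      * (Real.sqrt Real.pi : ℂ)) z = 2 * _root_.digamma (2*z) - 2 * (Real.log 2 : ℂ) := by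
    rw [logDeriv_mul_const z _ (Complex.ofReal_ne_zero.mpr (by positivity)),
      logDeriv_mul z h3
        (by rw [Complex.cpow_def_of_ne_zero two_ne_zero]; exact Complex.exp_ne_zero _) dG2
        (by rw [h2pow]; exact (hDexp z).differentiableAt),
      lgG2, lgpow]
    ring
  rw [lhs_eq, rhs_eq] at key
  exact key

/-- logarithmic derivative version of the reflection formula -/
lemma digamma_refl {z : ℂ} (hs : Complex.sin ((Real.pi : ℂ) * z) ≠ 0) :
    _root_.digamma z - _root_.digamma (1 - z) = -(Real.pi : ℂ) * Complex.cot ((Real.pi : ℂ) * z) := by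
  have hpi : (Real.pi : ℂ) ≠ 0 := Complex.ofReal_ne_zero.mpr Real.pi_ne_zero
  have hGz : Complex.Gamma z ≠ 0 := by
    intro h
    obtain ⟨m, hm⟩ := (Complex.Gamma_eq_zero_iff z).1 h
    exact hs (Complex.sin_eq_zero_iff.2 ⟨-m, by rw [hm]; push_cast; ring⟩)
  have hG1z : Complex.Gamma (1 - z) ≠ 0 := by
    intro h
    obtain ⟨m, hm⟩ := (Complex.Gamma_eq_zero_iff (1 - z)).1 h
    have hz : z = 1 + m := by linear_combination -hm
    exact hs (Complex.sin_eq_zero_iff.2 ⟨1 + m, by rw [hz]; push_cast; ring⟩)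
  have hfun : (fun z : ℂ => Complex.Gamma z * Complex.Gamma (1 - z))
      = fun z : ℂ => (Real.pi : ℂ) / Complex.sin ((Real.pi : ℂ) * z) :=
    funext Complex.Gamma_mul_Gamma_one_sub
  have key := congrFun (congrArg logDeriv hfun) z
  have d2 : DifferentiableAt ℂ (fun z : ℂ => Complex.Gamma (1 - z)) z :=
    (gamma_diff hG1z).comp z (by fun_prop)
  have lhs_eq : logDeriv (fun z : ℂ => Complex.Gamma z * Complex.Gamma (1 - z)) z
      = _root_.digamma z - _root_.digamma (1 - z) := by
    rw [logDeriv_mul z hGz hG1z (gamma_diff hGz) d2, digamma_eq_logDeriv]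
    have : (fun z : ℂ => Complex.Gamma (1 - z)) = Complex.Gamma ∘ (fun z : ℂ => 1 - z) := rfl
    rw [this, logDeriv_comp (f := Complex.Gamma) (g := fun z : ℂ => 1 - z)
      (gamma_diff hG1z) (by fun_prop)]
    have : deriv (fun z : ℂ => 1 - z) z = -1 := ((hasDerivAt_id z).const_sub 1).deriv
    rw [this]
    ring
  have dsin : DifferentiableAt ℂ (fun z : ℂ => Complex.sin ((Real.pi : ℂ) * z)) z :=
    Complex.differentiable_sin.differentiableAt.comp z (by fun_prop)
  have rhs_eq : logDeriv (fun z : ℂ => (Real.pi : ℂ) / Complex.sin ((Real.pi : ℂ) * z)) z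
      = -(Real.pi : ℂ) * Complex.cot ((Real.pi : ℂ) * z) := by
    rw [logDeriv_div z hpi hs (differentiableAt_const _) dsin]
    have : (fun z : ℂ => Complex.sin ((Real.pi : ℂ) * z))
        = Complex.sin ∘ (fun z : ℂ => (Real.pi : ℂ) * z) := rfl
    rw [this, logDeriv_comp (f := Complex.sin) (g := fun z : ℂ => (Real.pi : ℂ) * z)
      Complex.differentiable_sin.differentiableAt (by fun_prop),
      Complex.logDeriv_sin, logDeriv_const,
      deriv_const_mul _ differentiableAt_id, deriv_id'', mul_one]
    simp only [Pi.zero_apply]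
    ring
  rw [lhs_eq, rhs_eq] at key
  exact key

lemma digamma_one : _root_.digamma 1 = -(Real.eulerMascheroniConstant : ℂ) := by
  have h := Complex.hasDerivAt_Gamma_nat 0
  simp only [Nat.factorial_zero, Nat.cast_one, harmonic_zero, Rat.cast_zero, add_zero,
    Nat.cast_zero, zero_add, one_mul] at h
  rw [_root_.digamma, h.deriv, Complex.Gamma_one, div_one]

lemma gamma_half_ne : Complex.Gamma (1/2 : ℂ) ≠ 0 := by
  apply Complex.Gamma_ne_zero_of_re_pos
  rw [show ((1:ℂ)/2) = ((1/2 : ℝ) : ℂ) by norm_num, Complex.ofReal_re]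
  norm_num

lemma digamma_half : _root_.digamma (1/2 : ℂ)
    = -(Real.eulerMascheroniConstant : ℂ) - 2 * (Real.log 2 : ℂ) := by
  have h := digamma_dup (z := (1/2 : ℂ)) gamma_half_ne
    (by norm_num [Complex.Gamma_one]) (by norm_num [Complex.Gamma_one])
  norm_num at h
  linear_combination h + _root_.digamma_one - 2 * log_two_eq

lemma re_div_four (s : ℂ) : (s/4).re = s.re / 4 := by
  rw [show (4:ℂ) = ((4:ℝ):ℂ) by norm_num, Complex.div_ofReal_re]

/-- the function `s ↦ −2γ_e − 2ψ(s/2) − π·cot(πs/4)` extends to an analytic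
function `W` on the strip `{−2 < Re s < 4}` (its singularity at `s = 0` is removable),
and this extension satisfies `W(0) = 0` and `W(2) = 0`. -/
theorem stmt0 :
    ∃ W : ℂ → ℂ,
      AnalyticOnNhd ℂ W {s : ℂ | -2 < s.re ∧ s.re < 4} ∧
      (∀ s : ℂ, -2 < s.re → s.re < 4 → s ≠ 0 → W s = Wfun s) ∧
      W 0 = 0 ∧ W 2 = 0 := by
  refine ⟨fun s => -2 * (Real.eulerMascheroniConstant : ℂ) - 2 * (Real.log 2 : ℂ)
      - _root_.digamma (s/4 + 1/2) - _root_.digamma (1 - s/4), ?_, ?_, ?_, ?_⟩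
  · intro s hs
    obtain ⟨hs1, hs4⟩ := hs
    have hre1 : 0 < (s/4 + 1/2 : ℂ).re := by
      rw [Complex.add_re, re_div_four, show ((1:ℂ)/2) = ((1/2:ℝ):ℂ) by norm_num,
        Complex.ofReal_re]
      linarith
    have hre2 : 0 < (1 - s/4 : ℂ).re := by
      rw [Complex.sub_re, re_div_four, Complex.one_re]
      linarith
    have hin1 : AnalyticAt ℂ (fun s : ℂ => s/4 + 1/2) s :=
      (analyticAt_id.div analyticAt_const (by norm_num)).add analyticAt_const
    have hin2 : AnalyticAt ℂ (fun s : ℂ => 1 - s/4) s :=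
      analyticAt_const.sub (analyticAt_id.div analyticAt_const (by norm_num))
    have a1 : AnalyticAt ℂ (fun s : ℂ => _root_.digamma (s/4 + 1/2)) s :=
      AnalyticAt.comp (g := _root_.digamma) (f := fun s : ℂ => s/4 + 1/2)
        (analyticAt_digamma (Complex.Gamma_ne_zero_of_re_pos hre1)) hin1
    have a2 : AnalyticAt ℂ (fun s : ℂ => _root_.digamma (1 - s/4)) s :=
      AnalyticAt.comp (g := _root_.digamma) (f := fun s : ℂ => 1 - s/4)
        (analyticAt_digamma (Complex.Gamma_ne_zero_of_re_pos hre2)) hin2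
    exact ((analyticAt_const.sub a1).sub a2)
  · intro s hs1 hs4 hs0
    have hGz : Complex.Gamma (s/4) ≠ 0 := by
      rw [Ne, Complex.Gamma_eq_zero_iff]
      rintro ⟨m, hm⟩
      have hsm : s = -(4*m) := by linear_combination 4*hm
      have hre : s.re = -(4*(m:ℝ)) := by rw [hsm]; simp
      have : (m:ℝ) < 1 := by rw [hre] at hs1; linarith
      have hm0 : m = 0 := by exact_mod_cast Nat.lt_one_iff.mp (by exact_mod_cast this)
      rw [hm0] at hsm
      exact hs0 (by simpa using hsm)
    have hG2z : Complex.Gamma (2*(s/4)) ≠ 0 := by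
      rw [Ne, Complex.Gamma_eq_zero_iff]
      rintro ⟨m, hm⟩
      have hsm : s = -(2*m) := by linear_combination 2*hm
      have hre : s.re = -(2*(m:ℝ)) := by rw [hsm]; simp
      have : (m:ℝ) < 1 := by rw [hre] at hs1; linarith
      have hm0 : m = 0 := by exact_mod_cast Nat.lt_one_iff.mp (by exact_mod_cast this)
      rw [hm0] at hsm
      exact hs0 (by simpa using hsm)
    have hGz2 : Complex.Gamma (s/4 + 1/2) ≠ 0 := by
      apply Complex.Gamma_ne_zero_of_re_pos
      rw [Complex.add_re, re_div_four, show ((1:ℂ)/2) = ((1/2:ℝ):ℂ) by norm_num,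
        Complex.ofReal_re]
      linarith
    have hsin : Complex.sin ((Real.pi : ℂ) * (s/4)) ≠ 0 := by
      intro h
      obtain ⟨k, hk⟩ := Complex.sin_eq_zero_iff.1 h
      have hpi : (Real.pi : ℂ) ≠ 0 := Complex.ofReal_ne_zero.mpr Real.pi_ne_zero
      have hsk : s = 4*k := by
        have h' : (Real.pi : ℂ) * (s/4) = (Real.pi : ℂ) * k := by rw [hk]; ring
        have h4 := mul_left_cancel₀ hpi h'
        linear_combination 4*h4
      have hre : s.re = 4*(k:ℝ) := by rw [hsk]; simp
      have hk1 : (k:ℝ) < 1 := by rw [hre] at hs4; linarith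
      have hk2 : (-1:ℝ) < k := by rw [hre] at hs1; linarith
      have hk0 : k = 0 := by
        have h1 : k < 1 := by exact_mod_cast hk1
        have h2 : -1 < k := by exact_mod_cast hk2
        omega
      rw [hk0] at hsk
      exact hs0 (by simpa using hsk)
    have hdup := digamma_dup hGz hGz2 hG2z
    have hrefl := digamma_refl hsin
    have e1 : _root_.digamma (s/2) = _root_.digamma (2*(s/4)) := by congr 1; ring
    have e2 : Complex.cot ((Real.pi : ℂ) * s / 4) = Complex.cot ((Real.pi : ℂ) * (s/4)) := by
      rw [mul_div_assoc]
    simp only [Wfun, e1, e2]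
    linear_combination hrefl - hdup
  · show -2 * (Real.eulerMascheroniConstant : ℂ) - 2 * (Real.log 2 : ℂ)
      - _root_.digamma ((0:ℂ)/4 + 1/2) - _root_.digamma (1 - (0:ℂ)/4) = 0
    rw [show ((0:ℂ)/4 + 1/2) = 1/2 by norm_num, show (1 - (0:ℂ)/4) = 1 by norm_num,
      digamma_half, _root_.digamma_one]
    ring
  · show -2 * (Real.eulerMascheroniConstant : ℂ) - 2 * (Real.log 2 : ℂ)
      - _root_.digamma ((2:ℂ)/4 + 1/2) - _root_.digamma (1 - (2:ℂ)/4) = 0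
    rw [show ((2:ℂ)/4 + 1/2) = 1 by norm_num, show (1 - (2:ℂ)/4) = 1/2 by norm_num,
      digamma_half, _root_.digamma_one]
    ring
end

section
/- For all real numbers 0 < z < x one has ∫₀^z K(x,y) dy = −(1/(2x))·log(1 − z⁴/x⁴), and for all real numbers 0 < x < z the integral ∫_z^∞ K(x,y) dy converges and equals (1/(2x))·log((z² + x²)/(z² − x²)). -/
open MeasureTheory Set

/-- The kernel `K(x,y) = (1/|x² − y²| − 1/(x² + y²))·(y/x)`. -/
noncomputable def Kker (x y : ℝ) : ℝ :=
  (1 / |x ^ 2 - y ^ 2| - 1 / (x ^ 2 + y ^ 2)) * (y / x)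

lemma kker_deriv_lt (x : ℝ) (hx : 0 < x) {y : ℝ} (hy : 0 ≤ y) (hyx : y < x) :
    HasDerivAt (fun y : ℝ => -(1 / (2 * x)) * Real.log (x ^ 4 - y ^ 4)) (Kker x y) y := by
  have h2 : y ^ 2 < x ^ 2 := by nlinarith
  have hpos : 0 < x ^ 4 - y ^ 4 := by nlinarith
  have h1 : HasDerivAt (fun y : ℝ => x ^ 4 - y ^ 4) (-(4 * y ^ 3)) y := by
    simpa using (hasDerivAt_pow 4 y).const_sub (x ^ 4)
  have h3 := (Real.hasDerivAt_log hpos.ne').comp y h1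
  have h4 := h3.const_mul (-(1 / (2 * x)))
  refine h4.congr_deriv ?_
  unfold Kker
  rw [abs_of_pos (by nlinarith : (0:ℝ) < x ^ 2 - y ^ 2)]
  have hs : (0:ℝ) < x ^ 2 + y ^ 2 := by positivity
  have hne : x ^ 2 - y ^ 2 ≠ 0 := by nlinarith
  have hne4 : x ^ 4 - y ^ 4 ≠ 0 := hpos.ne'
  have hfac : x ^ 4 - y ^ 4 = (x ^ 2 - y ^ 2) * (x ^ 2 + y ^ 2) := by ring
  rw [hfac]
  field_simp
  ring

lemma kker_deriv_gt (x : ℝ) (hx : 0 < x) {y : ℝ} (hyx : x < y) :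
    HasDerivAt (fun y : ℝ => (1 / (2 * x)) *
      (Real.log (y ^ 2 - x ^ 2) - Real.log (y ^ 2 + x ^ 2))) (Kker x y) y := by
  have h2 : x ^ 2 < y ^ 2 := by nlinarith
  have hs : 0 < y ^ 2 + x ^ 2 := by positivity
  have ha : HasDerivAt (fun y : ℝ => y ^ 2 - x ^ 2) (2 * y) y := by
    simpa using (hasDerivAt_pow 2 y).sub_const (x ^ 2)
  have hb : HasDerivAt (fun y : ℝ => y ^ 2 + x ^ 2) (2 * y) y := by
    simpa using (hasDerivAt_pow 2 y).add_const (x ^ 2)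
  have hla := (Real.hasDerivAt_log (by nlinarith : (0:ℝ) < y ^ 2 - x ^ 2).ne').comp y ha
  have hlb := (Real.hasDerivAt_log hs.ne').comp y hb
  have h4 := (hla.sub hlb).const_mul (1 / (2 * x))
  refine h4.congr_deriv ?_
  unfold Kker
  rw [abs_of_neg (by nlinarith : x ^ 2 - y ^ 2 < 0)]
  have h5 : y ^ 2 - x ^ 2 ≠ 0 := by nlinarith
  have h6 : x ^ 2 - y ^ 2 ≠ 0 := by nlinarith
  field_simp
  ring

/-- for `0 < z < x`, `∫₀^z K(x,y) dy = −(1/(2x))·log(1 − z⁴/x⁴)`; and for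
`0 < x < z` the integral `∫_z^∞ K(x,y) dy` converges and equals
`(1/(2x))·log((z² + x²)/(z² − x²))`. -/
theorem stmt5 :
    (∀ x z : ℝ, 0 < z → z < x →
      ∫ y in Set.Ioo (0 : ℝ) z, Kker x y = -(1 / (2 * x)) * Real.log (1 - z ^ 4 / x ^ 4)) ∧
    (∀ x z : ℝ, 0 < x → x < z →
      MeasureTheory.IntegrableOn (fun y => Kker x y) (Set.Ioi z) ∧
      ∫ y in Set.Ioi z, Kker x y = (1 / (2 * x)) * Real.log ((z ^ 2 + x ^ 2) / (z ^ 2 - x ^ 2))) := by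
  constructor
  · intro x z hz hzx
    have hx : 0 < x := hz.trans hzx
    have hderiv : ∀ y ∈ Set.uIcc (0:ℝ) z,
        HasDerivAt (fun y : ℝ => -(1 / (2 * x)) * Real.log (x ^ 4 - y ^ 4)) (Kker x y) y := by
      intro y hy
      rw [Set.uIcc_of_le hz.le] at hy
      exact kker_deriv_lt x hx hy.1 (lt_of_le_of_lt hy.2 hzx)
    have hint : IntervalIntegrable (Kker x) volume 0 z := by
      apply ContinuousOn.intervalIntegrable
      unfold Kker
      apply ContinuousOn.mul
      · apply ContinuousOn.sub
        · apply ContinuousOn.div continuousOn_const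
            ((continuous_const.sub (continuous_pow 2)).abs.continuousOn)
          intro y hy
          rw [Set.uIcc_of_le hz.le] at hy
          have h2 : (0:ℝ) < x ^ 2 - y ^ 2 := by
            have := hy.1; have := lt_of_le_of_lt hy.2 hzx; nlinarith
          simpa [abs_of_pos h2] using h2.ne'
        · apply ContinuousOn.div continuousOn_const
            ((continuous_const.add (continuous_pow 2)).continuousOn)
          intro y hy
          show x ^ 2 + y ^ 2 ≠ 0
          have := pow_pos hx 2; have := sq_nonneg y; exact ne_of_gt (by linarith)
      · exact (continuous_id.div_const x).continuousOn
    have key := intervalIntegral.integral_eq_sub_of_hasDerivAt hderiv hint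
    have hIoo : ∫ y in Set.Ioo (0:ℝ) z, Kker x y = ∫ y in (0:ℝ)..z, Kker x y := by
      rw [intervalIntegral.integral_of_le hz.le, MeasureTheory.integral_Ioc_eq_integral_Ioo]
    rw [hIoo, key]
    have hx4 : (0:ℝ) < x ^ 4 := by positivity
    have hz4 : (0:ℝ) < x ^ 4 - z ^ 4 := by
      have := pow_lt_pow_left₀ hzx hz.le (n := 4) (by norm_num); linarith
    have h1 : (1 : ℝ) - z ^ 4 / x ^ 4 = (x ^ 4 - z ^ 4) / x ^ 4 := by field_simp
    rw [h1, Real.log_div hz4.ne' hx4.ne']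
    simp only [pow_succ, pow_zero, one_mul, sub_zero]
    ring_nf
  · intro x z hx hxz
    set G : ℝ → ℝ := fun y =>
      (1 / (2 * x)) * (Real.log (y ^ 2 - x ^ 2) - Real.log (y ^ 2 + x ^ 2)) with hG
    have hderiv : ∀ y ∈ Set.Ici z, HasDerivAt G (Kker x y) y := fun y hy =>
      kker_deriv_gt x hx (lt_of_lt_of_le hxz hy)
    have hpos : ∀ y ∈ Set.Ioi z, 0 ≤ Kker x y := by
      intro y hy
      have hy' : x < y := hxz.trans hy
      have h2 : x ^ 2 < y ^ 2 := by nlinarith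
      unfold Kker
      rw [abs_of_neg (by nlinarith : x ^ 2 - y ^ 2 < 0)]
      have h3 : (1:ℝ) / (x ^ 2 + y ^ 2) ≤ 1 / (-(x ^ 2 - y ^ 2)) := by
        apply one_div_le_one_div_of_le (by nlinarith) (by nlinarith)
      have : 0 ≤ y / x := div_nonneg (by linarith) hx.le
      nlinarith
    have htend : Filter.Tendsto G Filter.atTop (nhds 0) := by
      have h1 : Filter.Tendsto (fun y : ℝ => (y ^ 2 - x ^ 2) / (y ^ 2 + x ^ 2))
          Filter.atTop (nhds 1) := by
        have h2 : Filter.Tendsto (fun y : ℝ => y ^ 2 + x ^ 2) Filter.atTop Filter.atTop :=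
          Filter.tendsto_atTop_add_const_right _ _ (Filter.tendsto_pow_atTop two_ne_zero)
        have h3 : Filter.Tendsto (fun y : ℝ => 2 * x ^ 2 / (y ^ 2 + x ^ 2))
            Filter.atTop (nhds 0) := Filter.Tendsto.div_atTop tendsto_const_nhds h2
        have h4 := (tendsto_const_nhds (x := (1:ℝ)) (f := Filter.atTop)).sub h3
        rw [sub_zero] at h4
        apply h4.congr'
        filter_upwards [Filter.eventually_gt_atTop x] with y hy
        have : y ^ 2 + x ^ 2 ≠ 0 := by positivity
        field_simp
        ring
      have h5 : Filter.Tendsto (fun y : ℝ => Real.log ((y ^ 2 - x ^ 2) / (y ^ 2 + x ^ 2)))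
          Filter.atTop (nhds 0) := by
        have := (Real.continuousAt_log one_ne_zero).tendsto.comp h1
        simpa [Function.comp_def] using this
      have h6 : Filter.Tendsto G Filter.atTop (nhds ((1 / (2 * x)) * 0)) := by
        apply Filter.Tendsto.const_mul
        apply h5.congr'
        filter_upwards [Filter.eventually_gt_atTop z] with y hy
        have hxy : x < y := hxz.trans hy
        have ha : (0:ℝ) < y ^ 2 - x ^ 2 := by nlinarith
        have hb : (0:ℝ) < y ^ 2 + x ^ 2 := by positivity
        rw [Real.log_div ha.ne' hb.ne']
      simpa using h6
    refine ⟨integrableOn_Ioi_deriv_of_nonneg' hderiv hpos htend, ?_⟩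
    rw [integral_Ioi_of_hasDerivAt_of_nonneg' hderiv hpos htend]
    have ha : (0:ℝ) < z ^ 2 - x ^ 2 := by nlinarith
    have hb : (0:ℝ) < z ^ 2 + x ^ 2 := by positivity
    rw [hG]
    rw [Real.log_div hb.ne' ha.ne']
    ring
end
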